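/- arXiv:1304.6280 — 3 statements merged into one kernel-verified Lean document; each statement's English description precedes it below -/
import Mathlib

section
/- Any morphism that is strongly quasiperiodic on finite words is strongly quasiperiodic on infinite words. -/
namespace QPm

variable {A : Type*}

/-- Image of a finite word under a morphism given by images of letters. -/
def applyF (f : A → List A) (w : List A) : List A := (w.map f).flatten

/-- A morphism is non-erasing if images of letters are nonempty. -/
def NonErasing (f : A → List A) : Prop := ∀ a, f a ≠ []

/-- `wpow u k` is the `k`-fold concatenation `u^k`. -/
def wpow (u : List A) (k : ℕ) : List A := (List.replicate k u).flatten

/-- Every position of `w` is covered by an occurrence of `q` in `w`. -/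
def Covers (q w : List A) : Prop :=
  ∀ i < w.length, ∃ j, j ≤ i ∧ i < j + q.length ∧ j + q.length ≤ w.length ∧
    (w.drop j).take q.length = q

/-- `w` is `q`-quasiperiodic. -/
def QP (q w : List A) : Prop := q ≠ [] ∧ w ≠ q ∧ Covers q w

def Quasiperiodic (w : List A) : Prop := ∃ q, QP q w

def Superprimitive (w : List A) : Prop := ¬ Quasiperiodic w

/-- `q` is THE quasiperiod (shortest quasiperiod) of `w`. -/
def IsQuasiperiod (q w : List A) : Prop :=
  QP q w ∧ ∀ q', QP q' w → q.length ≤ q'.length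

/-- Every position of the infinite word `x` is covered by an occurrence of `q`. -/
def InfCovers (q : List A) (x : ℕ → A) : Prop :=
  ∀ i : ℕ, ∃ j, j ≤ i ∧ i < j + q.length ∧
    ∀ t (ht : t < q.length), x (j + t) = q.get ⟨t, ht⟩

/-- The infinite word `x` is `q`-quasiperiodic. -/
def InfQP (q : List A) (x : ℕ → A) : Prop := q ≠ [] ∧ InfCovers q x

def InfQuasiperiodic (x : ℕ → A) : Prop := ∃ q, InfQP q x

/-- `q` is THE quasiperiod (shortest quasiperiod) of the infinite word `x`. -/
def IsInfQuasiperiod (q : List A) (x : ℕ → A) : Prop :=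
  InfQP q x ∧ ∀ q', InfQP q' x → q.length ≤ q'.length

/-- Image of an infinite word under a (non-erasing) morphism: the `n`-th letter
of `f(x)` is the `n`-th letter of the image of a sufficiently long prefix. -/
def mapInf (f : A → List A) (x : ℕ → A) (n : ℕ) : A :=
  (applyF f (List.ofFn (fun i : Fin (n + 1) => x i))).getD n (x 0)

/-- `f` maps every (nonempty) finite word to a quasiperiodic word. -/
def StronglyQPFin (f : A → List A) : Prop :=
  ∀ w : List A, w ≠ [] → Quasiperiodic (applyF f w)

/-- `f` maps every infinite word to a quasiperiodic infinite word. -/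
def StronglyQPInf (f : A → List A) : Prop :=
  ∀ x : ℕ → A, InfQuasiperiodic (mapInf f x)

/-- `f` maps some non-quasiperiodic finite word to a quasiperiodic word. -/
def WeaklyQPFin (f : A → List A) : Prop :=
  ∃ w : List A, ¬ Quasiperiodic w ∧ Quasiperiodic (applyF f w)

/-- `f` maps some non-quasiperiodic infinite word to a quasiperiodic word. -/
def WeaklyQPInf (f : A → List A) : Prop :=
  ∃ x : ℕ → A, ¬ InfQuasiperiodic x ∧ InfQuasiperiodic (mapInf f x)

/-- The ultimately periodic infinite word `u v^ω` (with default letter `d`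
used only when `v` is empty). -/
def ultPer (u v : List A) (d : A) : ℕ → A :=
  fun n => if h : n < u.length then u.get ⟨n, h⟩
           else v.getD ((n - u.length) % v.length) d

/-- A finite word is primitive if it is not a power `u^k` with `k ≥ 2`. -/
def Primitive (w : List A) : Prop :=
  ¬ ∃ (u : List A) (k : ℕ), 2 ≤ k ∧ w = wpow u k

/-- `k`-fold composition of the morphism `f`. -/
def iterF (f : A → List A) : ℕ → A → List A
  | 0, a => [a]
  | (k + 1), a => applyF f (iterF f k a)

-- ===== auxiliary lemmas =====
section Aux
variable {A : Type*}

theorem applyF_cons' (f : A → List A) (a : A) (u : List A) :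
    applyF f (a :: u) = f a ++ applyF f u := by
  simp [applyF]

theorem applyF_append' (f : A → List A) (u v : List A) :
    applyF f (u ++ v) = applyF f u ++ applyF f v := by
  simp [applyF]

theorem length_applyF_ge (f : A → List A) (hf : NonErasing f) (u : List A) :
    u.length ≤ (applyF f u).length := by
  induction u with
  | nil => simp [applyF]
  | cons a u ih =>
    rw [applyF_cons', List.length_append]
    have : 1 ≤ (f a).length := List.length_pos_iff.mpr (hf a)
    simp only [List.length_cons]
    omega

/-- prefix word of `x` of length `m` -/
def prefw (x : ℕ → A) (m : ℕ) : List A := List.ofFn (fun i : Fin m => x i)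

theorem length_prefw (x : ℕ → A) (m : ℕ) : (prefw x m).length = m := by
  simp [prefw]

theorem prefw_succ (x : ℕ → A) (m : ℕ) :
    prefw x (m + 1) = prefw x m ++ [x m] := by
  rw [prefw, List.ofFn_succ']; simp [List.concat_eq_append, prefw]

theorem prefw_split (x : ℕ → A) {m m' : ℕ} (h : m ≤ m') :
    ∃ s, prefw x m' = prefw x m ++ s := by
  induction m', h using Nat.le_induction with
  | base => exact ⟨[], by simp⟩
  | succ n hn ih =>
    obtain ⟨s, hs⟩ := ih
    exact ⟨s ++ [x n], by rw [prefw_succ, hs, List.append_assoc]⟩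

theorem getD_append_left' {l r : List A} {i : ℕ} (d : A) (h : i < l.length) :
    (l ++ r).getD i d = l.getD i d :=
  List.getD_append _ _ _ _ h

theorem getD_drop' (l : List A) (i j : ℕ) (d : A) :
    (l.drop i).getD j d = l.getD (i + j) d := by
  rcases Nat.lt_or_ge (i + j) l.length with h | h
  · rw [List.getD_eq_getElem _ _ (by simp; omega), List.getD_eq_getElem _ _ h, List.getElem_drop]
  · rw [List.getD_eq_default _ _ (by simp; omega), List.getD_eq_default _ _ (by omega)]

theorem getD_take' (l : List A) (i j : ℕ) (d : A) (h : j < i) :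
    (l.take i).getD j d = l.getD j d := by
  rcases Nat.lt_or_ge j l.length with h2 | h2
  · rw [List.getD_eq_getElem _ _ (by simp; omega), List.getD_eq_getElem _ _ h2, List.getElem_take]
  · rw [List.getD_eq_default _ _ (by simp; omega), List.getD_eq_default _ _ (by omega)]

theorem length_join_replicate (k : ℕ) (l : List A) :
    ((List.replicate k l).flatten).length = k * l.length := by
  simp [List.length_flatten]

theorem join_replicate_getD (l : List A) (d : A) :
    ∀ (k s : ℕ), s < k * l.length →
      ((List.replicate k l).flatten).getD s d = l.getD (s % l.length) d := by
  intro k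
  induction k with
  | zero => intro s hs; rw [Nat.zero_mul] at hs; omega
  | succ n ihn =>
    intro s hs
    rw [Nat.succ_mul] at hs
    rcases Nat.eq_zero_or_pos l.length with hl0 | hl0
    · rw [hl0, Nat.mul_zero] at hs; omega
    rw [List.replicate_succ]; show ((l ++ (List.replicate n l).flatten)).getD s d = _
    rcases Nat.lt_or_ge s l.length with h | h
    · rw [getD_append_left' d h, Nat.mod_eq_of_lt h]
    · obtain ⟨t, rfl⟩ : ∃ t, s = l.length + t := ⟨s - l.length, by omega⟩
      rw [List.getD_append_right _ _ _ _ (by omega)]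
      have : l.length + t - l.length = t := by omega
      rw [this, ihn t (by omega), Nat.add_mod_left]

theorem covers_take {q w : List A} (h : Covers q w) (hw : 0 < w.length) :
    w.take q.length = q := by
  obtain ⟨j, hj0, _, _, hjt⟩ := h 0 hw
  have : j = 0 := Nat.le_zero.mp hj0
  subst this
  simpa using hjt

theorem covers_le {q w : List A} (h : Covers q w) (hw : 0 < w.length) :
    q.length ≤ w.length := by
  obtain ⟨j, hj0, _, hle, _⟩ := h 0 hw
  omega

theorem covers_drop {q w : List A} (h : Covers q w) (hw : 0 < w.length) :
    w.drop (w.length - q.length) = q := by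
  obtain ⟨j, hj, hj2, hj3, hjt⟩ := h (w.length - 1) (by omega)
  have hje : j = w.length - q.length := by omega
  subst hje
  have hlen : (w.drop (w.length - q.length)).length = q.length := by
    rw [List.length_drop]; omega
  exact (List.take_of_length_le (le_of_eq hlen)).symm.trans hjt

end Aux




theorem fw (B : Type*) : ∀ (p : ℕ), 0 < p → ∀ (q N : ℕ), 0 < q → ∀ (G : ℕ → B),
    (∀ t, t + p ≤ N → G (t + p) = G t) →
    (∀ t, t + q ≤ N → G (t + q) = G t) →
    ∀ t, t + p + q ≤ N + Nat.gcd p q → G (t + Nat.gcd p q) = G t := by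
  intro p
  induction p using Nat.strong_induction_on with
  | _ p ih =>
    intro hp q N hq G h1 h2 t ht
    have hgp : Nat.gcd p q ≤ p := Nat.gcd_le_left _ hp
    have hgq : Nat.gcd p q ≤ q := Nat.gcd_le_right _ hq
    have hqN : q ≤ N := by omega
    have hr : ∀ s, s + q ≤ N → G (s + q % p) = G s := by
      intro s hs
      have climb : ∀ m : ℕ, s + q % p + m * p ≤ s + q → G (s + q % p + m * p) = G (s + q % p) := by
        intro m
        induction m with
        | zero => simp
        | succ n ihn =>
          intro hm
          rw [Nat.succ_mul] at hm ⊢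
          rw [← Nat.add_assoc, h1 _ (by omega), ihn (by omega)]
      have hdiv : q % p + (q / p) * p = q := by
        have := Nat.mod_add_div q p
        have h2 : (q / p) * p = p * (q / p) := Nat.mul_comm _ _
        omega
      have hc := climb (q / p) (by omega)
      rw [show s + q % p + q / p * p = s + q by omega] at hc
      rw [← hc, h2 s hs]
    rcases Nat.eq_zero_or_pos (q % p) with h0 | hpos
    · have hdvd : p ∣ q := Nat.dvd_of_mod_eq_zero h0
      have hg : Nat.gcd p q = p := Nat.gcd_eq_left hdvd
      rw [hg]
      apply h1
      have : p ≤ q := Nat.le_of_dvd hq hdvd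
      omega
    · have hlt : q % p < p := Nat.mod_lt _ hp
      have hrec := ih (q % p) hlt hpos p (N - q + q % p) hp G
        (fun s hs => hr s (by have := Nat.mod_le q p; omega))
        (fun s hs => h1 s (by have := Nat.mod_le q p; omega))
      have hg : Nat.gcd p q = Nat.gcd (q % p) p := Nat.gcd_rec p q
      rw [hg] at ht ⊢
      apply hrec
      omega

theorem mapInf_eq {A : Type*} (f : A → List A) (hf : NonErasing f) (x : ℕ → A) (m t : ℕ)
    (h : t < (applyF f (prefw x m)).length) :
    mapInf f x t = (applyF f (prefw x m)).getD t (x 0) := by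
  have hdef : mapInf f x t = (applyF f (prefw x (t + 1))).getD t (x 0) := rfl
  have hlen : ∀ m', t < m' → t < (applyF f (prefw x m')).length := by
    intro m' hm'
    have := length_applyF_ge f hf (prefw x m')
    rw [length_prefw] at this
    omega
  rcases le_total (t + 1) m with hm | hm
  · obtain ⟨s, hs⟩ := prefw_split x hm
    rw [hdef, hs, applyF_append', getD_append_left' _ (hlen _ (by omega))]
  · obtain ⟨s, hs⟩ := prefw_split x hm
    rw [hdef, hs, applyF_append', getD_append_left' _ h]

theorem core {A : Type*} (f : A → List A) (hf : NonErasing f) (h : StronglyQPFin f)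
    (x : ℕ → A) (n : ℕ) (hn : 1 ≤ n) :
    ∃ ℓ g : ℕ, 1 ≤ ℓ ∧ 1 ≤ g ∧ g ≤ (f (x 0)).length ∧
      (ℓ ≤ (applyF f (prefw x n)).length →
        ∀ i, i + ℓ ≤ (applyF f (prefw x n)).length →
          ∃ j, j ≤ i ∧ i < j + ℓ ∧ ∀ t, t < ℓ → mapInf f x (j + t) = mapInf f x t) ∧
      (∀ t, t + g < min ℓ (applyF f (prefw x n)).length →
        mapInf f x (t + g) = mapInf f x t) := by
  classical
  set d0 := x 0 with hd0
  set A0 := f (x 0) with hA0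
  set α := A0.length with hαdef
  have hα1 : 1 ≤ α := List.length_pos_iff.mpr (hf (x 0))
  set P := applyF f (prefw x n) with hPdef
  set L := P.length with hLdef
  set F := mapInf f x with hFdef
  have hLn : n ≤ L := by
    have h1 := length_applyF_ge f hf (prefw x n)
    rw [length_prefw] at h1
    exact h1
  have hL1 : 1 ≤ L := le_trans hn hLn
  set k := 2 * L + 2 * α + 2 with hkdef
  set T := (List.replicate k A0).flatten with hTdef
  have hT : applyF f (List.replicate k (x 0)) = T := by
    simp [applyF, List.map_replicate, hTdef, hA0]
  set W := P ++ T with hWdef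
  have hWu : applyF f (prefw x n ++ List.replicate k (x 0)) = W := by
    rw [applyF_append', hT]
  have hTlen : T.length = k * α := length_join_replicate _ _
  have hkα : 2 * L + 2 * α + 2 ≤ k * α := by
    calc 2 * L + 2 * α + 2 = k := rfl
    _ = k * 1 := (Nat.mul_one k).symm
    _ ≤ k * α := Nat.mul_le_mul_left k hα1
  have hWlen : W.length = L + k * α := by
    rw [hWdef, List.length_append, hTlen]
  -- apply strong quasiperiodicity
  have hne : prefw x n ++ List.replicate k (x 0) ≠ [] := by
    apply List.ne_nil_of_length_pos
    rw [List.length_append, length_prefw]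
    omega
  obtain ⟨q, hq0, hqW', hcov'⟩ := h _ hne
  rw [hWu] at hqW' hcov'
  set ℓ := q.length with hℓdef
  have hℓ1 : 1 ≤ ℓ := List.length_pos_iff.mpr hq0
  have hWpos : 0 < W.length := by omega
  have htake : W.take ℓ = q := covers_take hcov' hWpos
  have hℓW : ℓ ≤ W.length := covers_le hcov' hWpos
  have hℓlt : ℓ < W.length := by
    rcases Nat.lt_or_ge ℓ W.length with h' | h'
    · exact h'
    · exfalso
      apply hqW'
      rw [← htake, List.take_of_length_le (by omega)]
  set dd := W.length - ℓ with hdddef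
  have hdd1 : 1 ≤ dd := by omega
  have hdrop : W.drop dd = q := by
    have := covers_drop hcov' hWpos
    rwa [← hdddef] at this
  have hWq : ∀ t, t < ℓ → W.getD t d0 = q.getD t d0 := by
    intro t ht
    rw [← htake, getD_take' _ _ _ _ ht]
  have hWq2 : ∀ t, W.getD (dd + t) d0 = q.getD t d0 := by
    intro t
    rw [← hdrop, getD_drop']
  have per : ∀ t, t < ℓ → W.getD (t + dd) d0 = W.getD t d0 := by
    intro t ht
    rw [Nat.add_comm t dd, hWq2 t, hWq t ht]
  have hFP : ∀ t, t < L → F t = W.getD t d0 := by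
    intro t ht
    have h1 : F t = P.getD t d0 := mapInf_eq f hf x n t ht
    have h2 : W.getD t d0 = P.getD t d0 := getD_append_left' d0 ht
    rw [h1, h2]
  have hTv : ∀ s, s < k * α → W.getD (L + s) d0 = A0.getD (s % α) d0 := by
    intro s hs
    have h1 : W.getD (L + s) d0 = T.getD (L + s - P.length) d0 :=
      List.getD_append_right _ _ _ _ (Nat.le_add_right L s)
    have h2 : L + s - P.length = s := by
      have : P.length = L := rfl
      omega
    rw [h1, h2, hTdef, join_replicate_getD _ _ _ _ hs]
  refine ⟨ℓ, ?_⟩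
  rcases le_or_gt ℓ (k * α) with hcase | hcase
  · -- small/medium quasiperiod: period α
    refine ⟨α, hℓ1, hα1, le_refl _, ?_, ?_⟩
    · -- covering part
      intro hℓL i hi
      have hiW : i < W.length := by omega
      obtain ⟨j, hji, hij, hjW, hocc⟩ := hcov' i hiW
      refine ⟨j, hji, hij, ?_⟩
      intro t ht
      have hval : ∀ s, s < ℓ → q.getD s d0 = W.getD (j + s) d0 := by
        intro s hs
        rw [← hocc, getD_take' _ _ _ _ hs, getD_drop']
      have h1 : F (j + t) = W.getD (j + t) d0 := hFP _ (by omega)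
      have h2 : F t = W.getD t d0 := hFP _ (by omega)
      rw [h1, h2, ← hval t ht, hWq t ht]
    · -- periodicity part
      set e := k * α - ℓ with hedef
      have hval : ∀ t, t < min ℓ L → F t = A0.getD ((e + t) % α) d0 := by
        intro t ht
        have ht1 : t < ℓ := lt_of_lt_of_le ht (min_le_left _ _)
        have ht2 : t < L := lt_of_lt_of_le ht (min_le_right _ _)
        have hdd2 : t + dd = L + (e + t) := by omega
        rw [hFP t ht2, ← per t ht1, hdd2, hTv _ (by omega)]
      intro t ht
      have h1 := hval t (by omega)
      have h2 := hval (t + α) ht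
      rw [h2, h1, show e + (t + α) = (e + t) + α by omega, Nat.add_mod_right]
  · -- huge quasiperiod: border argument + Fine-Wilf
    have hddL : dd < L := by omega
    have hLℓ : L < ℓ := by omega
    set g := Nat.gcd dd α with hgdef
    have hg1 : 1 ≤ g := Nat.gcd_pos_of_pos_left _ hdd1
    have hgα : g ≤ α := Nat.gcd_le_right _ hα1
    obtain ⟨c, hc⟩ : g ∣ dd := Nat.gcd_dvd_left _ _
    set G : ℕ → A := fun s => W.getD (L + s) d0 with hGdef
    set N := k * α - 1 with hNdef
    have hper_d : ∀ s, s + dd ≤ N → G (s + dd) = G s := by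
      intro s hs
      have h1 : L + s < ℓ := by omega
      have := per (L + s) h1
      rw [hGdef]
      simp only []
      rw [show L + (s + dd) = (L + s) + dd by omega, this]
    have hper_α : ∀ s, s + α ≤ N → G (s + α) = G s := by
      intro s hs
      rw [hGdef]
      simp only []
      rw [hTv _ (by omega), hTv _ (by omega),
        show s + α = s + 1 * α by omega, Nat.add_mul_mod_self_right]
    have hFW := fw A dd hdd1 α N hα1 G hper_d hper_α
    rw [← hgdef] at hFW
    have hmodG : ∀ s, s ≤ dd + α → G s = G (s % g) := by
      intro s
      induction s using Nat.strong_induction_on with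
      | _ s ihs =>
        intro hs
        rcases Nat.lt_or_ge s g with h' | h'
        · rw [Nat.mod_eq_of_lt h']
        · have hstep := hFW (s - g) (by omega)
          rw [show (s - g) + g = s by omega] at hstep
          rw [hstep, ihs (s - g) (by omega) (by omega)]
          congr 1
          have h3 : (s - g) + g = s := by omega
          conv_rhs => rw [← h3]
          rw [Nat.add_mod_right]
    have hlift : ∀ m t, t < L → L - t ≤ m →
        ∃ s, s < dd ∧ W.getD t d0 = G s ∧ (s + L) % g = t % g := by
      intro m
      induction m with
      | zero => intro t ht hm; omega
      | succ m ihm =>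
        intro t ht hm
        have hWt : W.getD t d0 = W.getD (t + dd) d0 := (per t (by omega)).symm
        rcases Nat.lt_or_ge (t + dd) L with h2 | h2
        · obtain ⟨s, hs1, hs2, hs3⟩ := ihm (t + dd) h2 (by omega)
          refine ⟨s, hs1, hWt.trans hs2, ?_⟩
          rw [hs3, hc, show t + g * c = t + c * g by ring, Nat.add_mul_mod_self_right]
        · refine ⟨t + dd - L, by omega, ?_, ?_⟩
          · rw [hWt, hGdef]
            simp only []
            rw [show L + (t + dd - L) = t + dd by omega]
          · rw [show t + dd - L + L = t + dd by omega, hc,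
              show t + g * c = t + c * g by ring, Nat.add_mul_mod_self_right]
    refine ⟨g, hℓ1, hg1, hgα, ?_, ?_⟩
    · intro hℓL
      omega
    · intro t ht
      have ht2 : t + g < L := lt_of_lt_of_le ht (min_le_right _ _)
      obtain ⟨s1, hs1, he1, hm1⟩ := hlift L t (by omega) (by omega)
      obtain ⟨s2, hs2, he2, hm2⟩ := hlift L (t + g) ht2 (by omega)
      have hmm : s2 % g = s1 % g := by
        have h12 : (s2 + L) % g = (s1 + L) % g := by
          rw [hm1, hm2, show t + g = t + 1 * g by omega, Nat.add_mul_mod_self_right]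
        have : Nat.ModEq g (s2 + L) (s1 + L) := h12
        exact Nat.ModEq.add_right_cancel' L this
      have e1 : F t = G s1 := (hFP t (by omega)).trans he1
      have e2 : F (t + g) = G s2 := (hFP (t + g) ht2).trans he2
      rw [e1, e2, hmodG s2 (by omega), hmodG s1 (by omega), hmm]


theorem stmt2 {A : Type*} (f : A → List A) (hf : NonErasing f)
    (h : StronglyQPFin f) : StronglyQPInf f := by
  classical
  intro x
  set F := mapInf f x with hFdef
  set α := (f (x 0)).length with hαdef
  have hα1 : 1 ≤ α := List.length_pos_iff.mpr (hf (x 0))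
  set Lf : ℕ → ℕ := fun m => (applyF f (prefw x (m + 1))).length with hLfdef
  have hLge : ∀ m, m + 1 ≤ Lf m := by
    intro m
    have h1 := length_applyF_ge f hf (prefw x (m + 1))
    rw [length_prefw] at h1
    exact h1
  have CH : ∀ m : ℕ, ∃ ℓ g : ℕ, 1 ≤ ℓ ∧ 1 ≤ g ∧ g ≤ α ∧
      (ℓ ≤ Lf m → ∀ i, i + ℓ ≤ Lf m →
        ∃ j, j ≤ i ∧ i < j + ℓ ∧ ∀ t, t < ℓ → F (j + t) = F t) ∧
      (∀ t, t + g < min ℓ (Lf m) → F (t + g) = F t) :=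
    fun m => core f hf h x (m + 1) (by omega)
  choose ℓn gn h1 h2 h3 h4 h5 using CH
  have evt : ∀ (Q : ℕ → ℕ → Prop), (∀ v, 1 ≤ v → ∃ N, ∀ m, N ≤ m → ¬ Q v m) →
      ∀ B, ∃ N, ∀ m, N ≤ m → ∀ v, 1 ≤ v → v ≤ B → ¬ Q v m := by
    intro Q hq B
    induction B with
    | zero => exact ⟨0, fun m _ v hv1 hvB => by omega⟩
    | succ B ihB =>
      obtain ⟨N1, hN1⟩ := ihB
      obtain ⟨N2, hN2⟩ := hq (B + 1) (by omega)
      refine ⟨max N1 N2, fun m hm v hv1 hvB => ?_⟩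
      rcases Nat.lt_or_ge v (B + 1) with hv | hv
      · exact hN1 m (le_trans (le_max_left _ _) hm) v hv1 (by omega)
      · have hveq : v = B + 1 := by omega
        rw [hveq]
        exact hN2 m (le_trans (le_max_right _ _) hm)
  by_cases hb : ∃ ℓ, 1 ≤ ℓ ∧ ∀ N, ∃ m, N ≤ m ∧ ℓn m = ℓ ∧ ℓ ≤ Lf m
  · -- bounded case: a fixed prefix of F covers cofinally many prefixes
    obtain ⟨ℓ, hℓ1, hcof⟩ := hb
    refine ⟨List.ofFn (fun i : Fin ℓ => F i), ?_, ?_⟩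
    · intro hnil
      have := congrArg List.length hnil
      simp at this
      omega
    · intro i
      obtain ⟨m, hm, heq, hle⟩ := hcof (i + ℓ)
      have hcov := h4 m
      rw [heq] at hcov
      have hiL : i + ℓ ≤ Lf m := by
        have := hLge m
        omega
      obtain ⟨j, hj1, hj2, hj3⟩ := hcov hle i hiL
      refine ⟨j, hj1, ?_, ?_⟩
      · simpa using hj2
      · intro t ht
        have ht' : t < ℓ := by simpa using ht
        have hget : (List.ofFn (fun i : Fin ℓ => F i)).get ⟨t, ht⟩ = F t := by
          simp
        rw [hget]
        exact hj3 t ht'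
  · -- unbounded case: F is periodic with small period
    have hb' : ∀ ℓ, 1 ≤ ℓ → ∃ N, ∀ m, N ≤ m → ¬ (ℓn m = ℓ ∧ ℓ ≤ Lf m) := by
      intro ℓ hℓ
      by_contra hc
      push_neg at hc
      apply hb
      refine ⟨ℓ, hℓ, fun N => ?_⟩
      obtain ⟨m, hm, hQ⟩ := hc N
      exact ⟨m, hm, hQ.1, hQ.2⟩
    have hmin : ∀ B, ∃ N, ∀ m, N ≤ m → B < min (ℓn m) (Lf m) := by
      intro B
      obtain ⟨N, hN⟩ := evt (fun v m => ℓn m = v ∧ v ≤ Lf m) hb' B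
      refine ⟨max N B, fun m hm => ?_⟩
      have hmN : N ≤ m := le_trans (le_max_left _ _) hm
      have hmB : B ≤ m := le_trans (le_max_right _ _) hm
      have hLfB : B < Lf m := lt_of_lt_of_le (by omega) (hLge m)
      have hℓB : B < ℓn m := by
        by_contra hc
        push_neg at hc
        rcases le_or_gt (ℓn m) (Lf m) with hle | hlt
        · exact hN m hmN (ℓn m) (h1 m) hc ⟨rfl, hle⟩
        · omega
      exact lt_min hℓB hLfB
    have hgcof : ∃ g, 1 ≤ g ∧ ∀ N, ∃ m, N ≤ m ∧ gn m = g := by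
      by_contra hc
      push_neg at hc
      have hc' : ∀ v, 1 ≤ v → ∃ N, ∀ m, N ≤ m → ¬ (gn m = v) := by
        intro v hv
        by_contra hc2
        push_neg at hc2
        apply absurd (hc v hv)
        push_neg
        intro N
        obtain ⟨m, hm, hQ⟩ := hc2 N
        exact ⟨m, hm, hQ⟩
      obtain ⟨N, hN⟩ := evt (fun v m => gn m = v) hc' α
      exact hN N (le_refl N) (gn N) (h2 N) (h3 N) rfl
    obtain ⟨g, hg1, hgcofinal⟩ := hgcof
    have hper : ∀ t, F (t + g) = F t := by
      intro t
      obtain ⟨N, hN⟩ := hmin (t + g)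
      obtain ⟨m, hm, hgm⟩ := hgcofinal N
      have h5' := h5 m t
      rw [hgm] at h5'
      exact h5' (hN m hm)
    have hmul : ∀ c t, F (t + c * g) = F t := by
      intro c
      induction c with
      | zero => simp
      | succ c ihc =>
        intro t
        rw [Nat.succ_mul, ← Nat.add_assoc, hper, ihc]
    refine ⟨List.ofFn (fun i : Fin g => F i), ?_, ?_⟩
    · intro hnil
      have := congrArg List.length hnil
      simp at this
      omega
    · intro i
      refine ⟨i / g * g, Nat.div_mul_le_self i g, ?_, ?_⟩
      · have := Nat.lt_div_mul_add (a := i) hg1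
        simpa using this
      · intro t ht
        have ht' : t < g := by simpa using ht
        have hget : (List.ofFn (fun i : Fin g => F i)).get ⟨t, ht⟩ = F t := by
          simp
        rw [hget]
        show F (i / g * g + t) = F t
        rw [Nat.add_comm, hmul (i / g) t]


end QPm
end

section
/- The morphism f on {a,b} defined by f(a) = aa, f(b) = bb is weakly quasiperiodic on finite words but not weakly quasiperiodic on infinite words. -/
namespace QPm

variable {A : Type*}

/-- The morphism `a ↦ aa`, `b ↦ bb`. -/
def f5 : Bool → List Bool := fun x => [x, x]

lemma f5_getD (w : List Bool) (n : ℕ) (d : Bool) (h : n < 2 * w.length) :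
    (applyF f5 w).getD n d = w.getD (n/2) d := by
  induction w generalizing n with
  | nil => simp at h
  | cons c w ih =>
    have e : applyF f5 (c :: w) = c :: c :: applyF f5 w := by
      simp [applyF, f5]
    rw [e]
    match n with
    | 0 => simp
    | 1 => simp
    | (n+2) =>
      have h' : n < 2 * w.length := by simp at h; omega
      have e2 : (n+2)/2 = n/2 + 1 := by omega
      simp only [List.getD_cons_succ, e2]
      exact ih n h'

lemma mapInf_f5 (x : ℕ → Bool) (n : ℕ) : mapInf f5 x n = x (n/2) := by
  unfold mapInf
  rw [f5_getD _ _ _ (by simp; omega)]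
  rw [List.getD_eq_getElem _ _ (by simp; omega)]
  rw [List.getElem_ofFn]

theorem stmt5 : WeaklyQPFin f5 ∧ ¬ WeaklyQPInf f5 := by
  constructor
  · refine ⟨[true], ?_, ?_⟩
    · rintro ⟨q, hq0, hqne, hc⟩
      obtain ⟨j, hj1, hj2, hj3, hj4⟩ := hc 0 (by simp)
      have hj : j = 0 := Nat.le_zero.mp hj1
      subst hj
      have hlen : q.length = 1 := by simp at hj3; omega
      apply hqne
      rw [← hj4, hlen]
      simp
    · refine ⟨[true], by simp, ?_, ?_⟩
      · show applyF f5 [true] ≠ [true]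
        decide
      · intro i hi
        have : applyF f5 [true] = [true, true] := by decide
        rw [this] at hi ⊢
        simp at hi
        interval_cases i
        · exact ⟨0, by omega, by simp, by simp, by decide⟩
        · exact ⟨1, by omega, by simp, by simp, by decide⟩
  · rintro ⟨x, hxnq, q, hq0, hcov⟩
    apply hxnq
    have hy2 : ∀ n, mapInf f5 x n = x (n/2) := mapInf_f5 x
    have h0 : 0 < q.length := List.length_pos_iff.mpr hq0
    by_cases hodd : ∃ j, ¬ 2 ∣ j ∧ ∀ t (ht : t < q.length),
        mapInf f5 x (j+t) = q.get ⟨t, ht⟩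
    · -- q is constant, hence x is constant
      obtain ⟨j, hjodd, hocc⟩ := hodd
      obtain ⟨j', rfl⟩ : ∃ j', j = 2*j'+1 := ⟨j/2, by omega⟩
      obtain ⟨j0, hj0le, _, hocc0⟩ := hcov 0
      have hj0 : j0 = 0 := Nat.le_zero.mp hj0le
      subst hj0
      have hstep : ∀ t (h2 : t + 1 < q.length),
          q.get ⟨t, by omega⟩ = q.get ⟨t+1, h2⟩ := by
        intro t h2
        rcases Nat.even_or_odd t with he | ho
        · rw [← hocc0 t (by omega), ← hocc0 (t+1) h2, hy2, hy2]
          congr 1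
          obtain ⟨s, rfl⟩ := he
          omega
        · rw [← hocc t (by omega), ← hocc (t+1) h2, hy2, hy2]
          congr 1
          obtain ⟨s, rfl⟩ := ho
          omega
      have hconst : ∀ t (ht : t < q.length), q.get ⟨t, ht⟩ = q.get ⟨0, h0⟩ := by
        intro t
        induction t with
        | zero => intro _; rfl
        | succ t ih =>
          intro ht
          rw [← hstep t ht]
          exact ih (by omega)
      have hyc : ∀ i, mapInf f5 x i = q.get ⟨0, h0⟩ := by
        intro i
        obtain ⟨j, hj1, hj2, hocc'⟩ := hcov i
        have e : mapInf f5 x i = mapInf f5 x (j + (i - j)) := by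
          congr 1
          omega
        rw [e, hocc' (i - j) (by omega)]
        exact hconst _ _
      refine ⟨[q.get ⟨0, h0⟩], by simp, ?_⟩
      intro i
      refine ⟨i, le_refl i, by simp, ?_⟩
      intro t ht
      simp at ht
      subst ht
      show x (i + 0) = q.get ⟨0, h0⟩
      have := hyc (2*i)
      rw [hy2] at this
      simpa using this
    · -- all occurrences at even positions
      refine ⟨List.ofFn (fun s : Fin ((q.length+1)/2) =>
        q.get ⟨2*s.val, by have := s.isLt; omega⟩), ?_, ?_⟩
      · intro h
        have := congrArg List.length h
        simp only [List.length_ofFn, List.length_nil] at this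
        omega
      · intro i
        obtain ⟨j, hj1, hj2, hocc⟩ := hcov (2*i)
        have h2j : 2 ∣ j := by
          by_contra h
          exact hodd ⟨j, h, hocc⟩
        obtain ⟨j', rfl⟩ := h2j
        refine ⟨j', by omega, by simp; omega, ?_⟩
        intro t ht
        simp only [List.length_ofFn] at ht
        have h2t : 2*t < q.length := by omega
        rw [List.get_ofFn]
        have e : 2*j' + 2*t = 2*(j'+t) := by ring
        have := hocc (2*t) h2t
        rw [e, hy2] at this
        simp only [Nat.mul_div_cancel_left _ (by norm_num : 0 < 2)] at this
        rw [this]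
        rfl


end QPm
end

section
/- If a word q satisfies q = q1 q2 = q2 q3 with |q2| ≥ |q1| = |q3| ≥ 1 (i.e., q has a border of length at least half its length arising from an overlap), then q is quasiperiodic; in particular, a superprimitive word q cannot be written q = q1 q2 = q2 q3 with q1 nonempty and |q2| ≥ |q1|. -/
namespace QPm

variable {A : Type*}

theorem stmt8 {A : Type*} :
    (∀ q q1 q2 q3 : List A, q = q1 ++ q2 → q = q2 ++ q3 →
      q1.length ≤ q2.length → q1.length = q3.length → 1 ≤ q1.length →
      Quasiperiodic q) ∧
    (∀ q : List A, Superprimitive q →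
      ¬ ∃ q1 q2 q3 : List A,
          q = q1 ++ q2 ∧ q = q2 ++ q3 ∧ q1 ≠ [] ∧ q1.length ≤ q2.length) := by
  have main : ∀ q q1 q2 q3 : List A, q = q1 ++ q2 → q = q2 ++ q3 →
      q1.length ≤ q2.length → 1 ≤ q1.length → Quasiperiodic q := by
    intro q q1 q2 q3 h1 h2 hle h1len
    have hqlen : q.length = q1.length + q2.length := by rw [h1, List.length_append]
    refine ⟨q2, ?_, ?_, ?_⟩
    · intro h
      rw [h] at hle
      simp only [List.length_nil] at hle
      omega
    · intro h
      have := congrArg List.length h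
      omega
    · intro i hi
      by_cases hcase : i < q2.length
      · refine ⟨0, Nat.zero_le _, by simpa using hcase, ?_, ?_⟩
        · rw [h2, List.length_append]; omega
        · rw [List.drop_zero, h2, List.take_left]
      · refine ⟨q1.length, by omega, by omega, by omega, ?_⟩
        rw [h1, List.drop_left, List.take_length]
  constructor
  · intro q q1 q2 q3 h1 h2 hle _ h1len
    exact main q q1 q2 q3 h1 h2 hle h1len
  · rintro q hsp ⟨q1, q2, q3, h1, h2, hne, hle⟩
    exact hsp (main q q1 q2 q3 h1 h2 hle (by
      cases q1 with
      | nil => exact absurd rfl hne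
      | cons a l => simp [Nat.succ_le_succ]))

end QPm
end
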